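/- Let U be an open subset of ℝⁿ with n = 2m + 1 ≥ 7 odd, η a smooth closed 1-form on U, Φ a smooth 2-form on U such that η ∧ Φ^{∧m} is nowhere zero, and α a smooth function on U satisfying dΦ = 2α η ∧ Φ. Then the 1-form 2αη is closed; equivalently dα ∧ η = 0 at every point of U, so dα is pointwise proportional to η. -/

import Mathlib

set_option synthInstance.maxHeartbeats 1000000
set_option maxHeartbeats 1000000

noncomputable section

open ExteriorAlgebra

/-! ### Preamble: differential forms on open subsets of `ℝⁿ`

A (inhomogeneous) differential form on (an open subset of) `ℝⁿ` is modelled as a map from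
`ℝⁿ = Fin n → ℝ` into the exterior algebra `ExteriorAlgebra ℝ (Module.Dual ℝ (Fin n → ℝ))`
of the dual space; a differential `k`-form takes values in the `k`-th exterior power
`⋀[ℝ]^k (Module.Dual ℝ (Fin n → ℝ))`.  The wedge product is multiplication in the exterior
algebra.  To speak about continuity and differentiability we endow this (finite-dimensional)
exterior algebra with a norm, induced by a linear equivalence with `ℝ^d`; all norms on a
finite-dimensional real vector space are equivalent, so the resulting notions of continuous
and smooth differential forms do not depend on this choice.  The exterior derivative is
defined by the classical coordinate formula `dω = ∑ᵢ dxⁱ ∧ ∂ᵢω`. -/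

/-- The `i`-th exterior power of a finite-dimensional space vanishes for `i` larger
than the dimension. -/
theorem exteriorPower_eq_bot_of_finrank_lt {V : Type*} [AddCommGroup V] [Module ℝ V]
    [FiniteDimensional ℝ V] {i : ℕ} (hi : Module.finrank ℝ V < i) :
    ⋀[ℝ]^i V = ⊥ := by
  rw [← ιMulti_span_fixedDegree, Submodule.span_eq_bot]
  rintro x ⟨v, rfl⟩
  refine AlternatingMap.map_linearDependent _ v (fun h => ?_)
  have := h.fintype_card_le_finrank
  simp only [Fintype.card_fin] at this
  omega

/-- The exterior algebra of a finite-dimensional real vector space is finite-dimensional. -/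
instance instFiniteExteriorAlgebra {V : Type*} [AddCommGroup V] [Module ℝ V]
    [FiniteDimensional ℝ V] : Module.Finite ℝ (ExteriorAlgebra ℝ V) := by
  classical
  rw [Module.finite_def]
  set m := Module.finrank ℝ V
  have hfg : ∀ i : ℕ, (⋀[ℝ]^i V).FG := by
    intro i
    induction i with
    | zero =>
      rw [exteriorPower, pow_zero, Submodule.one_eq_span]
      exact Submodule.fg_span_singleton _
    | succ j ih =>
      rw [exteriorPower, pow_succ]
      exact Submodule.FG.mul ih
        (by rw [← Submodule.map_top]; exact Submodule.FG.map _ Module.Finite.fg_top)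
  set F : Submodule ℝ (ExteriorAlgebra ℝ V) := ∑ i ∈ Finset.range (m + 1), ⋀[ℝ]^i V with hF
  have hFfg : F.FG := by
    rw [hF]
    classical
    induction (Finset.range (m + 1)) using Finset.cons_induction with
    | empty => simpa using Submodule.fg_bot
    | cons a s ha ih =>
      rw [Finset.sum_cons, Submodule.add_eq_sup]
      exact Submodule.FG.sup (hfg a) ih
  have hle : ∀ i : ℕ, ⋀[ℝ]^i V ≤ F := by
    intro i
    by_cases h : i ≤ m
    · exact Finset.single_le_sum (f := fun i => ⋀[ℝ]^i V) (fun j _ => bot_le)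
        (Finset.mem_range.2 (by omega))
    · rw [exteriorPower_eq_bot_of_finrank_lt (by omega)]
      exact bot_le
  have htop : (⊤ : Submodule ℝ (ExteriorAlgebra ℝ V)) ≤ F := by
    intro x _
    rw [← DirectSum.sum_support_decompose (fun i : ℕ => ⋀[ℝ]^i V) x]
    exact Submodule.sum_mem _ fun i _ => hle i (DirectSum.decompose (fun i : ℕ => ⋀[ℝ]^i V) x i).2
  exact top_le_iff.mp htop ▸ hFfg

/-- The algebra of (inhomogeneous) exterior forms on `ℝⁿ`: the exterior algebra of the
dual space of `ℝⁿ`.  A `k`-form on `ℝⁿ` is an element of the submodule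
`⋀[ℝ]^k (Module.Dual ℝ (Fin n → ℝ))`. -/
abbrev FormAlgebra (n : ℕ) : Type := ExteriorAlgebra ℝ (Module.Dual ℝ (Fin n → ℝ))

/-- A norm on the (finite-dimensional) algebra of exterior forms on `ℝⁿ`, transported from
`ℝ^d` by a linear equivalence.  All norms on a finite-dimensional real space are equivalent,
so continuity/smoothness of form-valued maps does not depend on this choice. -/
instance instNormedFormAlgebra (n : ℕ) : NormedAddCommGroup (FormAlgebra n) :=
  NormedAddCommGroup.induced _ _ ((Module.finBasis ℝ (FormAlgebra n)).equivFun.toLinearMap)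
    (Module.finBasis ℝ (FormAlgebra n)).equivFun.injective

instance instNormedSpaceFormAlgebra (n : ℕ) : NormedSpace ℝ (FormAlgebra n) :=
  NormedSpace.induced ℝ _ _ ((Module.finBasis ℝ (FormAlgebra n)).equivFun.toLinearMap)

/-- The coordinate 1-forms `dxⁱ` on `ℝⁿ`. -/
def dx {n : ℕ} (i : Fin n) : FormAlgebra n := ExteriorAlgebra.ι ℝ (LinearMap.proj i)

/-- The exterior derivative of a form-valued map on `ℝⁿ`, via the classical coordinate
formula `dω = ∑ᵢ dxⁱ ∧ ∂ᵢω` (where `∂ᵢ` is the partial derivative in the direction of the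
`i`-th standard basis vector). -/
def extDeriv' {n : ℕ} (ω : (Fin n → ℝ) → FormAlgebra n) (x : Fin n → ℝ) : FormAlgebra n :=
  ∑ i : Fin n, dx i * fderiv ℝ ω x (Pi.single i 1)

end

noncomputable section

open ExteriorAlgebra

section PointwiseAlgebra

variable {V : Type*} [AddCommGroup V] [Module ℝ V]

theorem my_swap (x y : V) : ι ℝ x * ι ℝ y = -(ι ℝ y * ι ℝ x) :=
  eq_neg_of_add_eq_zero_left (ι_add_mul_swap x y)

theorem my_central (a b : V) (z : ExteriorAlgebra ℝ V) :
    (ι ℝ a * ι ℝ b) * z = z * (ι ℝ a * ι ℝ b) := by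
  induction z using ExteriorAlgebra.induction with
  | algebraMap r => exact (Algebra.commutes r _).symm
  | ι v =>
    rw [mul_assoc, my_swap b v, mul_neg, ← mul_assoc, my_swap a v, neg_mul, neg_neg, mul_assoc]
  | add x y hx hy => rw [mul_add, add_mul, hx, hy]
  | mul x y hx hy => rw [← mul_assoc, hx, mul_assoc, hy, ← mul_assoc]

theorem my_exists_dual_pair {a b : V} (h : LinearIndependent ℝ ![a, b]) :
    ∃ f : Module.Dual ℝ V, f a = 1 ∧ f b = 0 := by
  have hab : a ≠ b := by
    intro hab
    have h01 : (0 : Fin 2) = 1 := h.injective (by simp [hab])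
    exact absurd h01 (by decide)
  have hs : LinearIndepOn ℝ id (Set.range ![a, b]) := LinearIndependent.linearIndepOn_id h
  let B := Module.Basis.extend hs
  have haM : a ∈ hs.extend (Set.subset_univ _) := hs.subset_extend _ ⟨0, rfl⟩
  have hbM : b ∈ hs.extend (Set.subset_univ _) := hs.subset_extend _ ⟨1, rfl⟩
  refine ⟨B.coord ⟨a, haM⟩, ?_, ?_⟩
  · calc B.coord ⟨a, haM⟩ a = B.repr (B ⟨a, haM⟩) ⟨a, haM⟩ := by
          rw [Module.Basis.extend_apply_self]; rfl
      _ = 1 := by rw [Module.Basis.repr_self, Finsupp.single_eq_same]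
  · calc B.coord ⟨a, haM⟩ b = B.repr (B ⟨b, hbM⟩) ⟨a, haM⟩ := by
          rw [Module.Basis.extend_apply_self]; rfl
      _ = 0 := by
          rw [Module.Basis.repr_self,
            Finsupp.single_eq_of_ne (by simpa [Subtype.ext_iff] using hab)]

theorem my_exists_dual {a b : V} (hb : b ≠ 0) (h : a ∉ Submodule.span ℝ {b}) :
    ∃ f : Module.Dual ℝ V, f a = 1 ∧ f b = 0 := by
  refine my_exists_dual_pair (linearIndependent_fin2.mpr ⟨hb, fun c hc => ?_⟩)
  apply h
  rw [show a = c • b from by simpa using hc.symm]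
  exact Submodule.smul_mem _ c (Submodule.mem_span_singleton_self b)

theorem my_key (a b : V) (Φ : ExteriorAlgebra ℝ V) (m : ℕ) (hm : 2 ≤ m)
    (h1 : ι ℝ a * (ι ℝ b * Φ) = 0) (h2 : ι ℝ b * Φ ^ m ≠ 0) :
    ι ℝ a * ι ℝ b = 0 := by
  by_cases hmem : a ∈ Submodule.span ℝ {b}
  · obtain ⟨c, rfl⟩ := Submodule.mem_span_singleton.mp hmem
    rw [map_smul, smul_mul_assoc, ι_sq_zero, smul_zero]
  · have hb : b ≠ 0 := by rintro rfl; exact h2 (by rw [map_zero, zero_mul])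
    obtain ⟨f, hfa, hfb⟩ := my_exists_dual hb hmem
    exfalso
    apply h2
    obtain ⟨k, rfl⟩ : ∃ k, m = k + 2 := ⟨m - 2, by omega⟩
    have hc : CliffordAlgebra.contractLeft f (ι ℝ a * (ι ℝ b * Φ)) = 0 := by
      rw [h1, map_zero]
    rw [CliffordAlgebra.contractLeft_ι_mul, CliffordAlgebra.contractLeft_ι_mul, hfa, hfb,
      one_smul, zero_smul, zero_sub, mul_neg, sub_neg_eq_add] at hc
    set ω := CliffordAlgebra.contractLeft f Φ with hω
    have hbΦ : ι ℝ b * Φ = -(ι ℝ a * (ι ℝ b * ω)) := eq_neg_of_add_eq_zero_left hc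
    calc ι ℝ b * Φ ^ (k + 2) = (ι ℝ b * Φ) * Φ ^ (k + 1) := by
          rw [pow_succ', ← mul_assoc]
      _ = -((ι ℝ a * ι ℝ b) * (ω * Φ ^ (k + 1))) := by
          rw [hbΦ, neg_mul]; simp only [mul_assoc]
      _ = -(ω * (Φ ^ (k + 1) * (ι ℝ a * ι ℝ b))) := by
          rw [my_central, mul_assoc]
      _ = -(ω * ((ι ℝ a * (ι ℝ b * Φ)) * Φ ^ k)) := by
          rw [← my_central, pow_succ']; simp only [mul_assoc]
      _ = 0 := by rw [h1, zero_mul, mul_zero, neg_zero]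

theorem my_prop (a b : V) (hb : b ≠ 0) (h : ι ℝ a * ι ℝ b = 0) :
    ∃ c : ℝ, ι ℝ a = c • ι ℝ b := by
  by_cases hmem : a ∈ Submodule.span ℝ {b}
  · obtain ⟨c, rfl⟩ := Submodule.mem_span_singleton.mp hmem
    exact ⟨c, map_smul _ _ _⟩
  · exfalso
    obtain ⟨f, hfa, hfb⟩ := my_exists_dual hb hmem
    have hc : CliffordAlgebra.contractLeft f (ι ℝ a * ι ℝ b) = 0 := by rw [h, map_zero]
    rw [CliffordAlgebra.contractLeft_ι_mul, CliffordAlgebra.contractLeft_ι,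
      hfa, hfb, one_smul, map_zero, mul_zero, sub_zero] at hc
    exact hb (by rwa [ExteriorAlgebra.ι_eq_zero_iff] at hc)

end PointwiseAlgebra

section Calculus

variable {n : ℕ}

/-- Multiplication in the form algebra, as a continuous bilinear map. -/
def mulL (n : ℕ) : FormAlgebra n →L[ℝ] FormAlgebra n →L[ℝ] FormAlgebra n :=
  LinearMap.toContinuousLinearMap
    { toFun := fun a => LinearMap.toContinuousLinearMap (LinearMap.mul ℝ (FormAlgebra n) a)
      map_add' := fun x y => by ext z; simp [add_mul]
      map_smul' := fun c x => by ext z; simp [smul_mul_assoc] }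

theorem mulL_apply (a b : FormAlgebra n) : mulL n a b = a * b := rfl

theorem my_hasFDerivAt_mul {f g : (Fin n → ℝ) → FormAlgebra n} {x : Fin n → ℝ}
    {f' g' : (Fin n → ℝ) →L[ℝ] FormAlgebra n}
    (hf : HasFDerivAt f f' x) (hg : HasFDerivAt g g' x) :
    HasFDerivAt (fun y => f y * g y)
      (((mulL n (f x)).comp g') + (((mulL n).flip (g x)).comp f')) x := by
  have h := ((mulL n).isBoundedBilinearMap.hasFDerivAt (f x, g x)).comp x (hf.prodMk hg)
  exact h

theorem my_extDeriv_mul {f g : (Fin n → ℝ) → FormAlgebra n} {x : Fin n → ℝ}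
    (hf : DifferentiableAt ℝ f x) (hg : DifferentiableAt ℝ g x)
    (hf1 : f x ∈ LinearMap.range (ι ℝ : Module.Dual ℝ (Fin n → ℝ) →ₗ[ℝ] FormAlgebra n)) :
    extDeriv' (fun y => f y * g y) x = extDeriv' f x * g x - f x * extDeriv' g x := by
  obtain ⟨v, hv⟩ := hf1
  have hd := (my_hasFDerivAt_mul hf.hasFDerivAt hg.hasFDerivAt).fderiv
  unfold extDeriv'
  rw [hd]
  simp only [ContinuousLinearMap.add_apply, ContinuousLinearMap.coe_comp',
    Function.comp_apply, ContinuousLinearMap.flip_apply, mulL_apply]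
  simp only [mul_add, Finset.sum_add_distrib]
  have hswap : ∀ (i : Fin n) (z : FormAlgebra n),
      dx i * (f x * z) = -(f x * (dx i * z)) := by
    intro i z
    rw [← hv, ← mul_assoc, show (dx i * ι ℝ v) = -(ι ℝ v * dx i) from my_swap _ _,
      neg_mul, mul_assoc]
  simp only [hswap]
  rw [Finset.sum_neg_distrib, ← Finset.mul_sum]
  simp only [← mul_assoc]
  rw [← Finset.sum_mul]
  abel

theorem my_extDeriv_smul {c : (Fin n → ℝ) → ℝ} {ω : (Fin n → ℝ) → FormAlgebra n}
    {x : Fin n → ℝ} (hc : DifferentiableAt ℝ c x) (hω : DifferentiableAt ℝ ω x) :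
    extDeriv' (fun y => c y • ω y) x
      = extDeriv' (fun y => algebraMap ℝ (FormAlgebra n) (c y)) x * ω x
        + c x • extDeriv' ω x := by
  have hd := fderiv_fun_smul hc hω
  have haL : fderiv ℝ (fun y => algebraMap ℝ (FormAlgebra n) (c y)) x
      = ((Algebra.linearMap ℝ (FormAlgebra n)).toContinuousLinearMap).comp (fderiv ℝ c x) :=
    (((Algebra.linearMap ℝ (FormAlgebra n)).toContinuousLinearMap).hasFDerivAt.comp x
      hc.hasFDerivAt).fderiv
  unfold extDeriv'
  rw [hd, haL]
  simp only [ContinuousLinearMap.add_apply, ContinuousLinearMap.smul_apply,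
    ContinuousLinearMap.smulRight_apply, ContinuousLinearMap.coe_comp',
    Function.comp_apply, LinearMap.coe_toContinuousLinearMap', Algebra.linearMap_apply]
  rw [Finset.sum_mul, Finset.smul_sum, ← Finset.sum_add_distrib]
  refine Finset.sum_congr rfl (fun i _ => ?_)
  simp only [mul_add, mul_smul_comm]
  rw [show dx i * algebraMap ℝ (FormAlgebra n) (fderiv ℝ c x (Pi.single i 1))
      = fderiv ℝ c x (Pi.single i 1) • dx i from by rw [← Algebra.commutes, ← Algebra.smul_def],
    smul_mul_assoc]
  abel

theorem my_extDeriv_const_smul {ω : (Fin n → ℝ) → FormAlgebra n} {x : Fin n → ℝ}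
    (hω : DifferentiableAt ℝ ω x) (c : ℝ) :
    extDeriv' (fun y => c • ω y) x = c • extDeriv' ω x := by
  unfold extDeriv'
  rw [fderiv_fun_const_smul hω c, Finset.smul_sum]
  simp [mul_smul_comm]

theorem my_extDeriv_congr {f g : (Fin n → ℝ) → FormAlgebra n} {x : Fin n → ℝ}
    (h : f =ᶠ[nhds x] g) : extDeriv' f x = extDeriv' g x := by
  unfold extDeriv'
  rw [h.fderiv_eq]

theorem my_extDeriv_extDeriv {ω : (Fin n → ℝ) → FormAlgebra n} {x : Fin n → ℝ}
    (hω : ContDiffAt ℝ 2 ω x) : extDeriv' (extDeriv' ω) x = 0 := by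
  have hF : ContDiffAt ℝ 1 (fderiv ℝ ω) x := hω.fderiv_right (by norm_num)
  have hFd : DifferentiableAt ℝ (fderiv ℝ ω) x := hF.differentiableAt (by norm_num)
  have hsym : IsSymmSndFDerivAt ℝ ω x := hω.isSymmSndFDerivAt (by simp)
  set L : Fin n → (((Fin n → ℝ) →L[ℝ] FormAlgebra n) →L[ℝ] FormAlgebra n) :=
    fun i => (mulL n (dx i)).comp (ContinuousLinearMap.apply ℝ (FormAlgebra n) (Pi.single i 1))
    with hLdef
  have hL' : ∀ (i : Fin n) (φ : (Fin n → ℝ) →L[ℝ] FormAlgebra n),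
      L i φ = dx i * φ (Pi.single i 1) := fun i φ => rfl
  have hone : HasFDerivAt (extDeriv' ω)
      (∑ i, (L i).comp (fderiv ℝ (fderiv ℝ ω) x)) x := by
    have := HasFDerivAt.fun_sum (u := Finset.univ)
      (A := fun (i : Fin n) (y : Fin n → ℝ) => dx i * fderiv ℝ ω y (Pi.single i 1))
      (A' := fun i => (L i).comp (fderiv ℝ (fderiv ℝ ω) x))
      (fun i _ => ((L i).hasFDerivAt.comp x hFd.hasFDerivAt :
        HasFDerivAt (fun y => L i (fderiv ℝ ω y)) _ x))
    exact this
  have h0 : extDeriv' (extDeriv' ω) x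
      = ∑ j, ∑ i, dx j * (dx i *
          (fderiv ℝ (fderiv ℝ ω) x (Pi.single j 1) (Pi.single i 1))) := by
    show (∑ j, dx j * fderiv ℝ (extDeriv' ω) x (Pi.single j 1)) = _
    rw [hone.fderiv]
    refine Finset.sum_congr rfl (fun j _ => ?_)
    rw [ContinuousLinearMap.sum_apply, Finset.mul_sum]
    refine Finset.sum_congr rfl (fun i _ => ?_)
    rw [ContinuousLinearMap.comp_apply, hL']
  rw [h0]
  have hterm : ∀ j i : Fin n,
      dx j * (dx i * (fderiv ℝ (fderiv ℝ ω) x (Pi.single j 1) (Pi.single i 1)))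
      = -(dx i * (dx j * (fderiv ℝ (fderiv ℝ ω) x (Pi.single i 1) (Pi.single j 1)))) := by
    intro j i
    rw [hsym.eq (Pi.single j 1) (Pi.single i 1)]
    rw [← mul_assoc, show (dx j * dx i) = -(dx i * dx j) from my_swap _ _, neg_mul, mul_assoc]
  have hT : (∑ j, ∑ i, dx j * (dx i *
        (fderiv ℝ (fderiv ℝ ω) x (Pi.single j 1) (Pi.single i 1))))
      = -(∑ j, ∑ i, dx j * (dx i *
        (fderiv ℝ (fderiv ℝ ω) x (Pi.single j 1) (Pi.single i 1)))) := by
    conv_lhs => rw [Finset.sum_comm]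
    rw [← Finset.sum_neg_distrib]
    refine Finset.sum_congr rfl (fun i _ => ?_)
    rw [← Finset.sum_neg_distrib]
    exact Finset.sum_congr rfl (fun j _ => hterm j i)
  have h2 : (2:ℝ) • (∑ j, ∑ i, dx j * (dx i *
      (fderiv ℝ (fderiv ℝ ω) x (Pi.single j 1) (Pi.single i 1)))) = 0 := by
    rw [two_smul]
    nth_rewrite 2 [hT]
    simp
  exact (smul_eq_zero.mp h2).resolve_left two_ne_zero

end Calculus

end

/-!
STATEMENT 18: let `n = 2m + 1 ≥ 7` be odd, `U ⊆ ℝⁿ` open, `η` a smooth closed 1-form,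
`Φ` a smooth 2-form with `η ∧ Φ^{∧m}` nowhere zero, and `α` a smooth function with
`dΦ = 2α η ∧ Φ`.  Then `2αη` is closed; equivalently `dα ∧ η = 0` at every point, so
`dα` is pointwise proportional to `η`.  (A function `α` is regarded as a 0-form via
`algebraMap ℝ (FormAlgebra n)`, so that `dα = extDeriv (algebraMap ℝ _ ∘ α)`.)
-/
theorem statement18 (m : ℕ) (hm : 3 ≤ m) (n : ℕ) (hn : n = 2 * m + 1)
    (U : Set (Fin n → ℝ)) (hU : IsOpen U)
    (η Φ : (Fin n → ℝ) → FormAlgebra n) (α : (Fin n → ℝ) → ℝ)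
    (hη1 : ∀ x ∈ U, η x ∈ ⋀[ℝ]^1 (Module.Dual ℝ (Fin n → ℝ)))
    (hΦ2 : ∀ x ∈ U, Φ x ∈ ⋀[ℝ]^2 (Module.Dual ℝ (Fin n → ℝ)))
    (hηs : ContDiffOn ℝ (⊤ : ℕ∞) η U) (hΦs : ContDiffOn ℝ (⊤ : ℕ∞) Φ U)
    (hαs : ContDiffOn ℝ (⊤ : ℕ∞) α U)
    (hηcl : ∀ x ∈ U, extDeriv' η x = 0)
    (hvol : ∀ x ∈ U, η x * Φ x ^ m ≠ 0)
    (heq : ∀ x ∈ U, extDeriv' Φ x = (2 * α x) • (η x * Φ x)) :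
    (∀ x ∈ U, extDeriv' (fun y => (2 * α y) • η y) x = 0) ∧
    (∀ x ∈ U, extDeriv' (fun y => algebraMap ℝ (FormAlgebra n) (α y)) x * η x = 0) ∧
    (∀ x ∈ U, ∃ c : ℝ,
      extDeriv' (fun y => algebraMap ℝ (FormAlgebra n) (α y)) x = c • η x) := by
  have hUx : ∀ x ∈ U, U ∈ nhds x := fun x hx => hU.mem_nhds hx
  have hcast1 : (1 : WithTop ℕ∞) ≤ ((⊤ : ℕ∞) : WithTop ℕ∞) := by
    exact_mod_cast (le_top : (1:ℕ∞) ≤ ⊤)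
  have hcast2 : (2 : WithTop ℕ∞) ≤ ((⊤ : ℕ∞) : WithTop ℕ∞) := by norm_cast
  have hαd : ∀ x ∈ U, DifferentiableAt ℝ α x :=
    fun x hx => (hαs.contDiffAt (hUx x hx)).differentiableAt (by simp)
  have hηd : ∀ x ∈ U, DifferentiableAt ℝ η x :=
    fun x hx => (hηs.contDiffAt (hUx x hx)).differentiableAt (by simp)
  have hΦd : ∀ x ∈ U, DifferentiableAt ℝ Φ x :=
    fun x hx => (hΦs.contDiffAt (hUx x hx)).differentiableAt (by simp)
  have haLd : ∀ x ∈ U, DifferentiableAt ℝ (fun y => algebraMap ℝ (FormAlgebra n) (α y)) x :=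
    fun x hx =>
      ((Algebra.linearMap ℝ (FormAlgebra n)).toContinuousLinearMap.differentiable.differentiableAt).comp
        x (hαd x hx)
  have hηι : ∀ x ∈ U, η x ∈ LinearMap.range
      (ExteriorAlgebra.ι ℝ : Module.Dual ℝ (Fin n → ℝ) →ₗ[ℝ] FormAlgebra n) := by
    intro x hx
    have := hη1 x hx
    rwa [show (⋀[ℝ]^1 (Module.Dual ℝ (Fin n → ℝ)))
      = LinearMap.range (ExteriorAlgebra.ι ℝ : Module.Dual ℝ (Fin n → ℝ) →ₗ[ℝ] FormAlgebra n)
      from pow_one _] at this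
  have hθι : ∀ x ∈ U, extDeriv' (fun y => algebraMap ℝ (FormAlgebra n) (α y)) x ∈
      LinearMap.range (ExteriorAlgebra.ι ℝ : Module.Dual ℝ (Fin n → ℝ) →ₗ[ℝ] FormAlgebra n) := by
    intro x hx
    have haL : fderiv ℝ (fun y => algebraMap ℝ (FormAlgebra n) (α y)) x
        = ((Algebra.linearMap ℝ (FormAlgebra n)).toContinuousLinearMap).comp (fderiv ℝ α x) :=
      (((Algebra.linearMap ℝ (FormAlgebra n)).toContinuousLinearMap).hasFDerivAt.comp x
        (hαd x hx).hasFDerivAt).fderiv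
    unfold extDeriv'
    rw [haL]
    refine Submodule.sum_mem _ (fun i _ => ?_)
    simp only [ContinuousLinearMap.coe_comp', Function.comp_apply,
      LinearMap.coe_toContinuousLinearMap', Algebra.linearMap_apply]
    rw [← Algebra.commutes, ← Algebra.smul_def]
    exact ⟨(fderiv ℝ α x (Pi.single i 1)) • LinearMap.proj i, map_smul _ _ _⟩
  have h2θ : ∀ x ∈ U, extDeriv' (fun y => algebraMap ℝ (FormAlgebra n) (2 * α y)) x
      = (2:ℝ) • extDeriv' (fun y => algebraMap ℝ (FormAlgebra n) (α y)) x := by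
    intro x hx
    have hfun : (fun y => algebraMap ℝ (FormAlgebra n) (2 * α y))
        = fun y => (2:ℝ) • (algebraMap ℝ (FormAlgebra n) (α y)) := by
      funext y
      rw [map_mul, ← Algebra.smul_def]
    rw [hfun, my_extDeriv_const_smul (haLd x hx) 2]
  have hkey : ∀ x ∈ U,
      extDeriv' (fun y => algebraMap ℝ (FormAlgebra n) (α y)) x * (η x * Φ x) = 0 := by
    intro x hx
    have hd2 : extDeriv' (extDeriv' Φ) x = 0 :=
      my_extDeriv_extDeriv ((hΦs.contDiffAt (hUx x hx)).of_le hcast2)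
    have hcongr : extDeriv' (extDeriv' Φ) x
        = extDeriv' (fun y => (2 * α y) • (η y * Φ y)) x :=
      my_extDeriv_congr (Filter.eventuallyEq_of_mem (hUx x hx) (fun y hy => heq y hy))
    have hc2 : DifferentiableAt ℝ (fun y => 2 * α y) x := (hαd x hx).const_mul 2
    have hprod : DifferentiableAt ℝ (fun y => η y * Φ y) x :=
      (my_hasFDerivAt_mul (hηd x hx).hasFDerivAt (hΦd x hx).hasFDerivAt).differentiableAt
    have hexp := my_extDeriv_smul hc2 hprod
    obtain ⟨b, hb⟩ := hηι x hx
    have hηΦ : extDeriv' (fun y => η y * Φ y) x = 0 := by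
      rw [my_extDeriv_mul (hηd x hx) (hΦd x hx) (hηι x hx), hηcl x hx, zero_mul, heq x hx,
        zero_sub, mul_smul_comm, ← mul_assoc, ← hb, ExteriorAlgebra.ι_sq_zero, zero_mul, smul_zero, neg_zero]
    rw [hηΦ, smul_zero, add_zero, h2θ x hx, smul_mul_assoc] at hexp
    have hfin : (2:ℝ) • (extDeriv' (fun y => algebraMap ℝ (FormAlgebra n) (α y)) x
        * (η x * Φ x)) = 0 := by
      rw [← hexp, ← hcongr, hd2]
    exact (smul_eq_zero.mp hfin).resolve_left two_ne_zero
  have hbul2 : ∀ x ∈ U,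
      extDeriv' (fun y => algebraMap ℝ (FormAlgebra n) (α y)) x * η x = 0 := by
    intro x hx
    obtain ⟨a, ha⟩ := hθι x hx
    obtain ⟨b, hb⟩ := hηι x hx
    rw [← ha, ← hb]
    refine my_key a b (Φ x) m (by omega) ?_ ?_
    · rw [ha, hb]
      exact hkey x hx
    · rw [hb]
      exact hvol x hx
  refine ⟨?_, hbul2, ?_⟩
  · intro x hx
    rw [my_extDeriv_smul ((hαd x hx).const_mul 2) (hηd x hx), hηcl x hx, smul_zero, add_zero,
      h2θ x hx, smul_mul_assoc, hbul2 x hx, smul_zero]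
  · intro x hx
    obtain ⟨a, ha⟩ := hθι x hx
    obtain ⟨b, hb⟩ := hηι x hx
    have hbne : b ≠ 0 := by
      intro h0
      apply hvol x hx
      rw [← hb, h0, map_zero, zero_mul]
    obtain ⟨c, hc⟩ := my_prop a b hbne (by rw [ha, hb]; exact hbul2 x hx)
    exact ⟨c, by rw [← ha, hc, hb]⟩
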